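/- Let Ω be a probability space and let Y, X_C, X_J, X, X̃¹, X̃² be random variables with values in standard Borel spaces F, E_C, E_J, E, E, E respectively. Assume: (i) X̃¹ is conditionally independent of Y given X_C and the conditional distribution of X̃¹ given X_C equals the conditional distribution of X given X_C (almost everywhere, as Markov kernels from E_C to E); (ii) X̃² is conditionally independent of Y given (X_C, X_J) and the conditional distribution of X̃² given (X_C, X_J) equals the conditional distribution of X given (X_C, X_J) (almost everywhere, as Markov kernels from E_C × E_J to E). If Y is conditionally independent of X_J given X_C, then the joint law of (Y, X̃¹) equals the joint law of (Y, X̃²). -/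

import Mathlib

open MeasureTheory ProbabilityTheory

section Aux

/-- The conditional expectation of an indicator is a.e. bounded in norm by 1. -/
lemma dedact_norm_condexp_indicator_le_one {Ω : Type*} {m mΩ : MeasurableSpace Ω}
    {P : Measure Ω} [IsProbabilityMeasure P] (hm : m ≤ mΩ)
    {A : Set Ω} (hA : MeasurableSet[mΩ] A) :
    ∀ᵐ ω ∂P, ‖(P⟦A|m⟧) ω‖ ≤ 1 := by
  have h0 : 0 ≤ᵐ[P] P⟦A|m⟧ :=
    condExp_nonneg (Filter.Eventually.of_forall fun ω =>
      Set.indicator_nonneg (fun _ _ => zero_le_one) ω)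
  have h1 : P⟦A|m⟧ ≤ᵐ[P] P[(fun _ => (1 : ℝ))|m] := by
    refine condExp_mono ((integrable_const (1 : ℝ)).indicator hA) (integrable_const _) ?_
    exact Filter.Eventually.of_forall fun ω => Set.indicator_le_self' (fun _ _ => zero_le_one) ω
  filter_upwards [h0, h1] with ω hω0 hω1
  rw [Real.norm_eq_abs, abs_of_nonneg hω0]
  simpa [condExp_const hm (1 : ℝ)] using hω1

/-- Pulling a bounded `m`-measurable factor out of an integral against a conditional
expectation. -/
lemma dedact_integral_mul_condexp {Ω : Type*} {m mΩ : MeasurableSpace Ω}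
    {P : Measure Ω} [IsProbabilityMeasure P] (hm : m ≤ mΩ) {g f : Ω → ℝ}
    (hg : StronglyMeasurable[m] g) {c : ℝ} (hgb : ∀ᵐ ω ∂P, ‖g ω‖ ≤ c)
    (hf : Integrable f P) :
    ∫ ω, g ω * f ω ∂P = ∫ ω, g ω * (P[f|m]) ω ∂P := by
  have h := condExp_stronglyMeasurable_mul_of_bound hm hg hf c hgb
  calc ∫ ω, g ω * f ω ∂P = ∫ ω, (g * f) ω ∂P := rfl
    _ = ∫ ω, (P[g * f|m]) ω ∂P := (integral_condExp hm).symm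
    _ = ∫ ω, (g * (P[f|m])) ω ∂P := integral_congr_ae h
    _ = ∫ ω, g ω * (P[f|m]) ω ∂P := rfl

/-- Tower property under conditional independence: if `Y ⫫ X_J | X_C`, then conditioning an
event of `Y` on `(X_C, X_J)` is the same as conditioning on `X_C` alone. -/
lemma dedact_condexp_eq_of_condIndepFun
    {Ω : Type*} {m1 m2 mΩ : MeasurableSpace Ω} [StandardBorelSpace Ω]
    {P : Measure Ω} [IsProbabilityMeasure P]
    {FF EC EJ : Type*} [MeasurableSpace FF] [MeasurableSpace EC] [MeasurableSpace EJ]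
    {Y : Ω → FF} {XC : Ω → EC} {XJ : Ω → EJ}
    (hY : Measurable Y) (hXC : Measurable XC) (hXJ : Measurable XJ)
    (hm1_def : m1 = MeasurableSpace.comap XC inferInstance)
    (hm2_def : m2 = MeasurableSpace.comap (fun ω => (XC ω, XJ ω)) inferInstance)
    (hm1 : m1 ≤ mΩ) (hm2 : m2 ≤ mΩ)
    (hYJ : CondIndepFun m1 hm1 Y XJ P)
    {s : Set FF} (hs : MeasurableSet s) :
    P⟦Y ⁻¹' s | m2⟧ =ᵐ[P] P⟦Y ⁻¹' s | m1⟧ := by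
  set g : Ω → ℝ := P⟦Y ⁻¹' s | m1⟧ with hg_def
  have hg_meas : StronglyMeasurable[m1] g := stronglyMeasurable_condExp
  have hg_int : Integrable g P := integrable_condExp
  have hg_nonneg : 0 ≤ᵐ[P] g :=
    condExp_nonneg (Filter.Eventually.of_forall fun ω =>
      Set.indicator_nonneg (fun _ _ => zero_le_one) ω)
  have hg_bdd : ∀ᵐ ω ∂P, ‖g ω‖ ≤ 1 := dedact_norm_condexp_indicator_le_one hm1 (hY hs)
  have hm12 : m1 ≤ m2 := by
    rw [hm1_def, hm2_def]
    intro t ht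
    obtain ⟨u, hu, rfl⟩ := ht
    exact ⟨u ×ˢ Set.univ, hu.prod MeasurableSet.univ, by ext ω; simp⟩
  -- the key rectangle computation
  have key : ∀ (u : Set EC) (v : Set EJ), MeasurableSet u → MeasurableSet v →
      ∫ ω in XC ⁻¹' u ∩ XJ ⁻¹' v, g ω ∂P
        = (P ((XC ⁻¹' u ∩ XJ ⁻¹' v) ∩ Y ⁻¹' s)).toReal := by
    intro u v hu hv
    have hA : MeasurableSet[mΩ] (XC ⁻¹' u) := hXC hu
    have hB : MeasurableSet[mΩ] (XJ ⁻¹' v) := hXJ hv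
    have hA_m1 : MeasurableSet[m1] (XC ⁻¹' u) := by rw [hm1_def]; exact ⟨u, hu, rfl⟩
    have hIA_meas : StronglyMeasurable[m1] ((XC ⁻¹' u).indicator (fun _ => (1 : ℝ))) :=
      stronglyMeasurable_const.indicator hA_m1
    have hIAg_meas : StronglyMeasurable[m1]
        (fun ω => (XC ⁻¹' u).indicator (fun _ => (1 : ℝ)) ω * g ω) := hIA_meas.mul hg_meas
    have hIAg_bdd : ∀ᵐ ω ∂P, ‖(XC ⁻¹' u).indicator (fun _ => (1 : ℝ)) ω * g ω‖ ≤ 1 := by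
      filter_upwards [hg_bdd] with ω hω
      rw [norm_mul]
      calc ‖(XC ⁻¹' u).indicator (fun _ => (1 : ℝ)) ω‖ * ‖g ω‖ ≤ 1 * 1 := by
            refine mul_le_mul ?_ hω (norm_nonneg _) zero_le_one
            by_cases h : ω ∈ XC ⁻¹' u <;> simp [Set.indicator_apply, h]
        _ = 1 := one_mul 1
    -- LHS
    have hLHS : ∫ ω in XC ⁻¹' u ∩ XJ ⁻¹' v, g ω ∂P
        = ∫ ω, ((XC ⁻¹' u).indicator (fun _ => (1 : ℝ)) ω * g ω)
            * (P⟦XJ ⁻¹' v|m1⟧) ω ∂P := by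
      rw [← integral_indicator (hA.inter hB)]
      have heq : ∀ ω, (XC ⁻¹' u ∩ XJ ⁻¹' v).indicator g ω
          = ((XC ⁻¹' u).indicator (fun _ => (1 : ℝ)) ω * g ω)
              * (XJ ⁻¹' v).indicator (fun _ => (1 : ℝ)) ω := by
        intro ω
        by_cases h1 : ω ∈ XC ⁻¹' u <;> by_cases h2 : ω ∈ XJ ⁻¹' v <;>
          simp [Set.indicator_apply, h1, h2, Set.mem_inter_iff]
      rw [integral_congr_ae (Filter.Eventually.of_forall heq)]
      exact dedact_integral_mul_condexp hm1 hIAg_meas hIAg_bdd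
        ((integrable_const (1 : ℝ)).indicator hB)
    -- RHS
    have hRHS : (P ((XC ⁻¹' u ∩ XJ ⁻¹' v) ∩ Y ⁻¹' s)).toReal
        = ∫ ω, ((XC ⁻¹' u).indicator (fun _ => (1 : ℝ)) ω * g ω)
            * (P⟦XJ ⁻¹' v|m1⟧) ω ∂P := by
      have hset : (XC ⁻¹' u ∩ XJ ⁻¹' v) ∩ Y ⁻¹' s
          = XC ⁻¹' u ∩ (Y ⁻¹' s ∩ XJ ⁻¹' v) := by
        rw [Set.inter_assoc, Set.inter_comm (XJ ⁻¹' v)]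
      rw [hset, ← measureReal_def, ← integral_indicator_one (hA.inter ((hY hs).inter hB))]
      have hsplit : ∀ ω, (XC ⁻¹' u ∩ (Y ⁻¹' s ∩ XJ ⁻¹' v)).indicator
            (1 : Ω → ℝ) ω
          = (XC ⁻¹' u).indicator (fun _ => (1 : ℝ)) ω
              * (Y ⁻¹' s ∩ XJ ⁻¹' v).indicator (fun _ => (1 : ℝ)) ω := by
        intro ω
        by_cases h1 : ω ∈ XC ⁻¹' u <;> by_cases h2 : ω ∈ Y ⁻¹' s ∩ XJ ⁻¹' v <;>
          simp [Set.indicator_apply, h1, h2, Set.mem_inter_iff]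
      have h1 : ∫ ω, (XC ⁻¹' u ∩ (Y ⁻¹' s ∩ XJ ⁻¹' v)).indicator (1 : Ω → ℝ) ω ∂P
          = ∫ ω, (XC ⁻¹' u).indicator (fun _ => (1 : ℝ)) ω
              * (P⟦Y ⁻¹' s ∩ XJ ⁻¹' v|m1⟧) ω ∂P := by
        rw [integral_congr_ae (Filter.Eventually.of_forall hsplit)]
        refine dedact_integral_mul_condexp hm1 hIA_meas (c := 1) ?_
          ((integrable_const (1 : ℝ)).indicator ((hY hs).inter hB))
        refine Filter.Eventually.of_forall fun ω => ?_
        by_cases h : ω ∈ XC ⁻¹' u <;> simp [Set.indicator_apply, h]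
      have h2 : P⟦Y ⁻¹' s ∩ XJ ⁻¹' v|m1⟧
          =ᵐ[P] fun ω => g ω * (P⟦XJ ⁻¹' v|m1⟧) ω := by
        subst hm1_def
        exact (condIndepFun_iff_condExp_inter_preimage_eq_mul hY hXJ).mp hYJ s v hs hv
      rw [h1]
      have h3 : ∫ ω, (XC ⁻¹' u).indicator (fun _ => (1 : ℝ)) ω
            * (P⟦Y ⁻¹' s ∩ XJ ⁻¹' v|m1⟧) ω ∂P
          = ∫ ω, (XC ⁻¹' u).indicator (fun _ => (1 : ℝ)) ω
              * (g ω * (P⟦XJ ⁻¹' v|m1⟧) ω) ∂P := by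
        refine integral_congr_ae ?_
        filter_upwards [h2] with ω hω
        rw [hω]
      rw [h3]
      congr 1
      funext ω
      ring
    rw [hLHS, hRHS]
  -- define the two finite measures on EC × EJ
  have hT : Measurable (fun ω => (XC ω, XJ ω)) := hXC.prodMk hXJ
  have hwd_apply : ∀ {C : Set Ω}, MeasurableSet[mΩ] C →
      (P.withDensity (fun ω => ENNReal.ofReal (g ω))) C
        = ENNReal.ofReal (∫ ω in C, g ω ∂P) := by
    intro C hC
    rw [withDensity_apply _ hC,
      ← ofReal_integral_eq_lintegral_ofReal hg_int.integrableOn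
        (ae_restrict_of_ae hg_nonneg)]
  haveI hfin2 : IsFiniteMeasure ((P.restrict (Y ⁻¹' s)).map (fun ω => (XC ω, XJ ω))) := by
    constructor
    rw [Measure.map_apply hT MeasurableSet.univ]
    exact measure_lt_top _ _
  haveI hfin1 : IsFiniteMeasure
      ((P.withDensity (fun ω => ENNReal.ofReal (g ω))).map (fun ω => (XC ω, XJ ω))) := by
    constructor
    rw [Measure.map_apply hT MeasurableSet.univ, Set.preimage_univ,
      hwd_apply MeasurableSet.univ]
    exact ENNReal.ofReal_lt_top
  have hμ_eq : (P.withDensity (fun ω => ENNReal.ofReal (g ω))).map (fun ω => (XC ω, XJ ω))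
      = (P.restrict (Y ⁻¹' s)).map (fun ω => (XC ω, XJ ω)) := by
    refine ext_of_generate_finite _ generateFrom_prod.symm isPiSystem_prod ?_ ?_
    · rintro _ ⟨u, hu, v, hv, rfl⟩
      rw [Measure.map_apply hT (hu.prod hv), Measure.map_apply hT (hu.prod hv),
        Measure.restrict_apply (hT (hu.prod hv))]
      have hpre : (fun ω => (XC ω, XJ ω)) ⁻¹' (u ×ˢ v) = XC ⁻¹' u ∩ XJ ⁻¹' v :=
        Set.mk_preimage_prod XC XJ
      rw [hpre, hwd_apply ((hXC hu).inter (hXJ hv)), key u v hu hv,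
        ENNReal.ofReal_toReal (measure_ne_top _ _)]
    · rw [Measure.map_apply hT MeasurableSet.univ, Measure.map_apply hT MeasurableSet.univ,
        Set.preimage_univ, hwd_apply MeasurableSet.univ,
        Measure.restrict_apply MeasurableSet.univ, Set.univ_inter]
      have htot : ∫ ω, g ω ∂P = (P (Y ⁻¹' s)).toReal := by
        rw [hg_def, integral_condExp hm1, integral_indicator_const (1 : ℝ) (hY hs), smul_eq_mul, mul_one, measureReal_def]
      rw [setIntegral_univ, htot, ENNReal.ofReal_toReal (measure_ne_top _ _)]
  -- conclude via uniqueness of conditional expectation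
  refine (ae_eq_condExp_of_forall_setIntegral_eq hm2
    ((integrable_const (1 : ℝ)).indicator (hY hs))
    (fun A _ _ => hg_int.integrableOn) ?_ ?_).symm
  · intro A hA _
    rw [hm2_def] at hA
    obtain ⟨W, hW, rfl⟩ := hA
    have hAmeas : MeasurableSet[mΩ] ((fun ω => (XC ω, XJ ω)) ⁻¹' W) := hT hW
    have h1 : ENNReal.ofReal (∫ ω in (fun ω => (XC ω, XJ ω)) ⁻¹' W, g ω ∂P)
        = ((P.withDensity (fun ω => ENNReal.ofReal (g ω))).map
            (fun ω => (XC ω, XJ ω))) W := by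
      rw [Measure.map_apply hT hW, hwd_apply hAmeas]
    have h2 : ((P.restrict (Y ⁻¹' s)).map (fun ω => (XC ω, XJ ω))) W
        = P ((fun ω => (XC ω, XJ ω)) ⁻¹' W ∩ Y ⁻¹' s) := by
      rw [Measure.map_apply hT hW, Measure.restrict_apply hAmeas]
    have h3 : ∫ ω in (fun ω => (XC ω, XJ ω)) ⁻¹' W,
          (Y ⁻¹' s).indicator (fun _ => (1 : ℝ)) ω ∂P
        = (P ((fun ω => (XC ω, XJ ω)) ⁻¹' W ∩ Y ⁻¹' s)).toReal := by
      rw [integral_indicator_const (1 : ℝ) (hY hs), measureReal_def, Measure.restrict_apply (hY hs), Set.inter_comm, smul_eq_mul, mul_one]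
    have h4 : ∫ ω in (fun ω => (XC ω, XJ ω)) ⁻¹' W, g ω ∂P
        = (ENNReal.ofReal (∫ ω in (fun ω => (XC ω, XJ ω)) ⁻¹' W, g ω ∂P)).toReal := by
      rw [ENNReal.toReal_ofReal (setIntegral_nonneg_ae hAmeas
        (by filter_upwards [hg_nonneg] with ω hω _ using hω))]
    rw [h4, h1, hμ_eq, h2, h3]
  · exact (hg_meas.mono hm12).aestronglyMeasurable

end Aux

/-- Distributional identity in the proof of Associative Sensitivity of AI (Case 1):
if `X̃¹` is a conditionally resampled version of `X` given `X_C`, `X̃²` is a conditionally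
resampled version of `X` given `(X_C, X_J)`, and `Y ⫫ X_J | X_C`, then
`P(Y, X̃¹) = P(Y, X̃²)`. -/
theorem dedact_interventional_distributions_coincide
    {Ω : Type*} [MeasurableSpace Ω] [StandardBorelSpace Ω] [Nonempty Ω]
    (P : Measure Ω) [IsProbabilityMeasure P]
    {F EC EJ E : Type*}
    [MeasurableSpace F] [StandardBorelSpace F] [Nonempty F]
    [MeasurableSpace EC] [StandardBorelSpace EC] [Nonempty EC]
    [MeasurableSpace EJ] [StandardBorelSpace EJ] [Nonempty EJ]
    [MeasurableSpace E] [StandardBorelSpace E] [Nonempty E]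
    (Y : Ω → F) (XC : Ω → EC) (XJ : Ω → EJ) (X Xt1 Xt2 : Ω → E)
    (hY : Measurable Y) (hXC : Measurable XC) (hXJ : Measurable XJ)
    (hX : Measurable X) (hXt1 : Measurable Xt1) (hXt2 : Measurable Xt2)
    -- (i) `X̃¹ ⫫ Y | X_C` and `P(X̃¹ | X_C) = P(X | X_C)`
    (hci1 : CondIndepFun (MeasurableSpace.comap XC inferInstance) hXC.comap_le Xt1 Y P)
    (hker1 : ∀ᵐ c ∂(P.map XC), condDistrib Xt1 XC P c = condDistrib X XC P c)
    -- (ii) `X̃² ⫫ Y | (X_C, X_J)` and `P(X̃² | X_C, X_J) = P(X | X_C, X_J)`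
    (hci2 : CondIndepFun (MeasurableSpace.comap (fun ω => (XC ω, XJ ω)) inferInstance)
      (Measurable.comap_le (hXC.prodMk hXJ)) Xt2 Y P)
    (hker2 : ∀ᵐ p ∂(P.map (fun ω => (XC ω, XJ ω))),
      condDistrib Xt2 (fun ω => (XC ω, XJ ω)) P p
        = condDistrib X (fun ω => (XC ω, XJ ω)) P p)
    -- `Y ⫫ X_J | X_C`
    (hYJ : CondIndepFun (MeasurableSpace.comap XC inferInstance) hXC.comap_le Y XJ P) :
    P.map (fun ω => (Y ω, Xt1 ω)) = P.map (fun ω => (Y ω, Xt2 ω)) := by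
  have hT : Measurable (fun ω => (XC ω, XJ ω)) := hXC.prodMk hXJ
  have hm12 : (MeasurableSpace.comap XC inferInstance : MeasurableSpace Ω)
      ≤ MeasurableSpace.comap (fun ω => (XC ω, XJ ω)) inferInstance := by
    intro t ht
    obtain ⟨u, hu, rfl⟩ := ht
    exact ⟨u ×ˢ Set.univ, hu.prod MeasurableSet.univ, by ext ω; simp⟩
  haveI : IsProbabilityMeasure (P.map (fun ω => (Y ω, Xt1 ω))) :=
    Measure.isProbabilityMeasure_map (hY.prodMk hXt1).aemeasurable
  haveI : IsProbabilityMeasure (P.map (fun ω => (Y ω, Xt2 ω))) :=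
    Measure.isProbabilityMeasure_map (hY.prodMk hXt2).aemeasurable
  refine ext_of_generate_finite _ generateFrom_prod.symm isPiSystem_prod ?_ (by simp)
  rintro _ ⟨s, hs, t, ht, rfl⟩
  rw [Measure.map_apply (hY.prodMk hXt1) (hs.prod ht),
    Measure.map_apply (hY.prodMk hXt2) (hs.prod ht),
    Set.mk_preimage_prod Y Xt1, Set.mk_preimage_prod Y Xt2]
  refine (ENNReal.toReal_eq_toReal_iff' (measure_ne_top P _) (measure_ne_top P _)).mp ?_
  -- notation
  have gbdd : ∀ᵐ ω ∂P, ‖(P⟦Y ⁻¹' s|MeasurableSpace.comap XC inferInstance⟧) ω‖ ≤ 1 :=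
    dedact_norm_condexp_indicator_le_one hXC.comap_le (hY hs)
  -- conditional kernels agree with `X`'s: level of condexp
  have e1 : P⟦Xt1 ⁻¹' t|MeasurableSpace.comap XC inferInstance⟧
      =ᵐ[P] P⟦X ⁻¹' t|MeasurableSpace.comap XC inferInstance⟧ := by
    have hk1 : ∀ᵐ ω ∂P, condDistrib Xt1 XC P (XC ω) = condDistrib X XC P (XC ω) :=
      ae_of_ae_map hXC.aemeasurable hker1
    refine ((condDistrib_ae_eq_condExp hXC hXt1 ht).symm.trans ?_).trans
      (condDistrib_ae_eq_condExp hXC hX ht)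
    filter_upwards [hk1] with ω hω
    rw [hω]
  have e2 : P⟦Xt2 ⁻¹' t|MeasurableSpace.comap (fun ω => (XC ω, XJ ω)) inferInstance⟧
      =ᵐ[P] P⟦X ⁻¹' t|MeasurableSpace.comap (fun ω => (XC ω, XJ ω)) inferInstance⟧ := by
    have hk2 : ∀ᵐ ω ∂P, condDistrib Xt2 (fun ω => (XC ω, XJ ω)) P (XC ω, XJ ω)
        = condDistrib X (fun ω => (XC ω, XJ ω)) P (XC ω, XJ ω) :=
      ae_of_ae_map hT.aemeasurable hker2
    refine ((condDistrib_ae_eq_condExp hT hXt2 ht).symm.trans ?_).trans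
      (condDistrib_ae_eq_condExp hT hX ht)
    filter_upwards [hk2] with ω hω
    rw [hω]
  -- tower property from `Y ⫫ X_J | X_C`
  have eY : P⟦Y ⁻¹' s|MeasurableSpace.comap (fun ω => (XC ω, XJ ω)) inferInstance⟧
      =ᵐ[P] P⟦Y ⁻¹' s|MeasurableSpace.comap XC inferInstance⟧ :=
    dedact_condexp_eq_of_condIndepFun hY hXC hXJ rfl rfl hXC.comap_le hT.comap_le hYJ hs
  -- conditional independence identities
  have hciA := (condIndepFun_iff_condExp_inter_preimage_eq_mul hXt1 hY).mp hci1 t s ht hs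
  have hciB := (condIndepFun_iff_condExp_inter_preimage_eq_mul hXt2 hY).mp hci2 t s ht hs
  calc (P (Y ⁻¹' s ∩ Xt1 ⁻¹' t)).toReal
      = ∫ ω, (Xt1 ⁻¹' t ∩ Y ⁻¹' s).indicator (fun _ => (1 : ℝ)) ω ∂P := by
        rw [integral_indicator_const (1 : ℝ) ((hXt1 ht).inter (hY hs)), smul_eq_mul, mul_one, measureReal_def,
          Set.inter_comm]
    _ = ∫ ω, (P⟦Xt1 ⁻¹' t ∩ Y ⁻¹' s|MeasurableSpace.comap XC inferInstance⟧) ω ∂P :=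
        (integral_condExp hXC.comap_le).symm
    _ = ∫ ω, (P⟦Y ⁻¹' s|MeasurableSpace.comap XC inferInstance⟧) ω
          * (P⟦X ⁻¹' t|MeasurableSpace.comap XC inferInstance⟧) ω ∂P := by
        refine integral_congr_ae ?_
        filter_upwards [hciA, e1] with ω h1 h2
        rw [h1, h2, mul_comm]
    _ = ∫ ω, (P⟦Y ⁻¹' s|MeasurableSpace.comap XC inferInstance⟧) ω
          * (X ⁻¹' t).indicator (fun _ => (1 : ℝ)) ω ∂P :=
        (dedact_integral_mul_condexp hXC.comap_le stronglyMeasurable_condExp (c := 1) gbdd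
          ((integrable_const (1 : ℝ)).indicator (hX ht))).symm
    _ = ∫ ω, (P⟦Y ⁻¹' s|MeasurableSpace.comap XC inferInstance⟧) ω
          * (P⟦X ⁻¹' t|MeasurableSpace.comap (fun ω => (XC ω, XJ ω)) inferInstance⟧) ω ∂P :=
        dedact_integral_mul_condexp hT.comap_le (stronglyMeasurable_condExp.mono hm12)
          (c := 1) gbdd ((integrable_const (1 : ℝ)).indicator (hX ht))
    _ = ∫ ω, (P⟦Xt2 ⁻¹' t ∩ Y ⁻¹' s|MeasurableSpace.comap
          (fun ω => (XC ω, XJ ω)) inferInstance⟧) ω ∂P := by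
        refine integral_congr_ae ?_
        filter_upwards [hciB, e2, eY] with ω h1 h2 h3
        rw [h1, h2, h3, mul_comm]
    _ = ∫ ω, (Xt2 ⁻¹' t ∩ Y ⁻¹' s).indicator (fun _ => (1 : ℝ)) ω ∂P :=
        integral_condExp hT.comap_le
    _ = (P (Y ⁻¹' s ∩ Xt2 ⁻¹' t)).toReal := by
        rw [integral_indicator_const (1 : ℝ) ((hXt2 ht).inter (hY hs)), smul_eq_mul, mul_one, measureReal_def,
          Set.inter_comm]
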